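/- arXiv:0907.2577 — 2 statements merged into one kernel-verified Lean document; each statement's English description precedes it below -/
import Mathlib

section
/- Let N ≥ 2 be an integer with associated lists (α_j)_{j=1,…,μ} and (β_j)_{j=1,…,η}, let r_1, …, r_{φ(N)} be the elements of {1, 2, …, N} coprime to N, and set C_N := N^{φ(N)} · ∏_{p | N} p^{φ(N)/(p−1)}, the product being over the primes dividing N. Then for every real number x ≥ 0, C_N^x · (∏_{j=1}^{φ(N)} Γ(x + r_j/N)/Γ(r_j/N)) / Γ(x+1)^{φ(N)} = (∏_{j=1}^μ Γ(α_j x + 1)) / (∏_{j=1}^η Γ(β_j x + 1)), where Γ denotes the gamma function. -/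
open Finset

/-- Subsets of the set of distinct prime factors of `N` having even cardinality. -/
def evenSub (N : ℕ) : Finset (Finset ℕ) :=
  N.primeFactors.powerset.filter fun J => Even J.card

/-- Subsets of the set of distinct prime factors of `N` having odd cardinality. -/
def oddSub (N : ℕ) : Finset (Finset ℕ) :=
  N.primeFactors.powerset.filter fun J => Odd J.card

/-- `C_N = N^{φ(N)} ∏_{p ∣ N} p^{φ(N)/(p−1)}` (a positive integer, since `(p−1) ∣ φ(N)`
for every prime `p` dividing `N`). -/
def CN (N : ℕ) : ℕ :=
  N ^ N.totient * ∏ p ∈ N.primeFactors, p ^ (N.totient / (p - 1))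

lemma chunk (M : ℕ) (g : ℕ → ℝ) : ∀ n : ℕ,
    ∏ r ∈ Ioc 0 M, ∏ j ∈ range (n + 1), g (r + j * M) = ∏ k ∈ Ioc 0 (M * (n + 1)), g k := by
  intro n
  induction n with
  | zero => simp
  | succ n ih =>
    have h1 : ∏ r ∈ Ioc 0 M, ∏ j ∈ range (n + 2), g (r + j * M)
        = (∏ r ∈ Ioc 0 M, ∏ j ∈ range (n + 1), g (r + j * M))
          * ∏ r ∈ Ioc 0 M, g (r + (n + 1) * M) := by
      rw [← prod_mul_distrib]
      exact prod_congr rfl fun r _ => prod_range_succ _ _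
    have h2 : ∏ r ∈ Ioc 0 M, g (r + (n + 1) * M)
        = ∏ k ∈ Ioc (M * (n + 1)) (M * (n + 2)), g k := by
      have : Ioc (M * (n + 1)) (M * (n + 2))
          = Finset.map (addLeftEmbedding (M * (n + 1))) (Ioc 0 M) := by
        rw [Finset.map_add_left_Ioc]
        congr 1 <;> ring
      rw [this, Finset.prod_map]
      exact prod_congr rfl fun r _ => by simp [addLeftEmbedding]; ring_nf
    rw [h1, ih, h2, Finset.prod_Ioc_consecutive]
    · exact Nat.zero_le _
    · exact Nat.mul_le_mul_left _ (by omega)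

lemma ioc_range (K : ℕ) (h : ℕ → ℝ) : ∏ k ∈ Ioc 0 K, h k = ∏ j ∈ range K, h (1 + j) := by
  have : Ioc 0 K = Ico 1 (K + 1) := by rw [Finset.Ico_add_one_right_eq_Icc]; rfl
  rw [this, Finset.prod_Ico_eq_prod_range]
  simp

lemma seq_eq (M : ℕ) (hM : 1 ≤ M) {x : ℝ} (hx : 0 ≤ x) {n : ℕ} (hn : 1 ≤ n) :
    ∏ r ∈ Ioc 0 M, Real.GammaSeq (x + r / M) n / Real.GammaSeq ((r : ℝ) / M) n
      = ((n : ℝ) / ((M * (n + 1) - 1 : ℕ) : ℝ)) ^ ((M : ℝ) * x)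
          * (((M * (n + 1) : ℕ) : ℝ) / ((M * (n + 1) - 1 : ℕ) : ℝ))
          * Real.GammaSeq ((M : ℝ) * x + 1) (M * (n + 1) - 1) := by
  have hM0 : (0 : ℝ) < M := by exact_mod_cast hM
  have hn0 : (0 : ℝ) < n := by exact_mod_cast hn
  set K := M * (n + 1) with hK
  have hnK : n + 1 ≤ K := Nat.le_mul_of_pos_left _ hM
  have hK1 : 1 ≤ K := by omega
  set m := K - 1 with hm
  have hmK : m + 1 = K := by omega
  have hmn : n ≤ m := by omega
  have hm0 : (0 : ℝ) < m := by exact_mod_cast lt_of_lt_of_le hn hmn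
  -- step A
  have stepA : ∀ r ∈ Ioc 0 M,
      Real.GammaSeq (x + r / M) n / Real.GammaSeq ((r : ℝ) / M) n
        = (n : ℝ) ^ x * ∏ j ∈ range (n + 1), (((r : ℝ) / M + j) / (x + (r : ℝ) / M + j)) := by
    intro r hr
    have hr0 : (0 : ℝ) < r := by exact_mod_cast (mem_Ioc.1 hr).1
    have hrM : (0 : ℝ) < (r : ℝ) / M := by positivity
    have h1 : (0 : ℝ) < ∏ j ∈ range (n + 1), ((r : ℝ) / M + j) :=
      prod_pos fun j _ => by positivity
    have h2 : (0 : ℝ) < ∏ j ∈ range (n + 1), (x + (r : ℝ) / M + j) :=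
      prod_pos fun j _ => by positivity
    rw [Real.GammaSeq, Real.GammaSeq, Real.rpow_add hn0, prod_div_distrib]
    have hfac : (0 : ℝ) < (n.factorial : ℝ) := by exact_mod_cast n.factorial_pos
    have hnr : (0 : ℝ) < (n : ℝ) ^ ((r : ℝ) / M) := Real.rpow_pos_of_pos hn0 _
    field_simp
  rw [prod_congr rfl stepA, prod_mul_distrib, prod_const, Nat.card_Ioc, Nat.sub_zero]
  have hpow : ((n : ℝ) ^ x) ^ M = (n : ℝ) ^ ((M : ℝ) * x) := by
    rw [← Real.rpow_natCast ((n : ℝ) ^ x) M, ← Real.rpow_mul hn0.le, mul_comm]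
  -- reindex double product
  have hre : ∏ r ∈ Ioc 0 M, ∏ j ∈ range (n + 1), (((r : ℝ) / M + j) / (x + (r : ℝ) / M + j))
      = ∏ k ∈ Ioc 0 K, ((k : ℝ) / M) / (x + (k : ℝ) / M) := by
    rw [← chunk M (fun k : ℕ => ((k : ℝ) / M) / (x + (k : ℝ) / M)) n]
    refine prod_congr rfl fun r _ => prod_congr rfl fun j _ => ?_
    have hcast : ((r + j * M : ℕ) : ℝ) / M = (r : ℝ) / M + j := by
      push_cast; field_simp
    simp only [hcast]
    ring
  have hre2 : ∏ k ∈ Ioc 0 K, ((k : ℝ) / M) / (x + (k : ℝ) / M)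
      = ∏ k ∈ Ioc 0 K, ((k : ℝ) / ((M : ℝ) * x + k)) := by
    refine prod_congr rfl fun k hk => ?_
    have hk0 : (0 : ℝ) < k := by exact_mod_cast (mem_Ioc.1 hk).1
    have h1 : (0 : ℝ) < (M : ℝ) * x + k := by positivity
    have h2 : x + (k : ℝ) / M = ((M : ℝ) * x + k) / M := by field_simp
    rw [h2]
    field_simp
  have hD : (0 : ℝ) < ∏ k ∈ Ioc 0 K, ((M : ℝ) * x + k) :=
    prod_pos fun k hk => by
      have : (0 : ℝ) < k := by exact_mod_cast (mem_Ioc.1 hk).1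
      positivity
  have hfacK : ∏ k ∈ Ioc 0 K, (k : ℝ) = (K.factorial : ℝ) := by
    rw [← Nat.cast_prod]
    congr 1
    rw [show Ioc 0 K = Ico 1 (K + 1) by rw [Finset.Ico_add_one_right_eq_Icc]; rfl,
      Finset.prod_Ico_id_eq_factorial]
  have hGS : Real.GammaSeq ((M : ℝ) * x + 1) m
      = (m : ℝ) ^ ((M : ℝ) * x + 1) * m.factorial / ∏ k ∈ Ioc 0 K, ((M : ℝ) * x + k) := by
    rw [Real.GammaSeq, ioc_range]
    rw [hmK]
    congr 1
    refine prod_congr rfl fun j _ => by push_cast; ring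
  rw [hpow, hre, hre2, prod_div_distrib, hfacK, hGS]
  have e1 : ((n : ℝ) / (m : ℝ)) ^ ((M : ℝ) * x) = (n : ℝ) ^ ((M : ℝ) * x) / (m : ℝ) ^ ((M : ℝ) * x) :=
    Real.div_rpow hn0.le hm0.le _
  have e2 : (m : ℝ) ^ ((M : ℝ) * x + 1) = (m : ℝ) ^ ((M : ℝ) * x) * m := by
    rw [Real.rpow_add hm0, Real.rpow_one]
  have e3 : (K.factorial : ℝ) = K * m.factorial := by
    rw [← hmK, Nat.factorial_succ]; push_cast; ring
  have e4 : (0 : ℝ) < (m : ℝ) ^ ((M : ℝ) * x) := Real.rpow_pos_of_pos hm0 _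
  have e5 : (0 : ℝ) < (K : ℝ) := by exact_mod_cast hK1
  rw [e1, e2, e3]
  field_simp

open Filter Topology in
lemma gauss (M : ℕ) (hM : 1 ≤ M) {x : ℝ} (hx : 0 ≤ x) :
    ∏ r ∈ Ioc 0 M, Real.Gamma (x + r / M) / Real.Gamma ((r : ℝ) / M)
      = (M : ℝ) ^ (-((M : ℝ) * x)) * Real.Gamma ((M : ℝ) * x + 1) := by
  have hM0 : (0 : ℝ) < M := by exact_mod_cast hM
  set m : ℕ → ℕ := fun n => M * (n + 1) - 1 with hmdef
  have hmn : ∀ n, n ≤ m n := fun n => by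
    have : n + 1 ≤ M * (n + 1) := Nat.le_mul_of_pos_left _ hM
    simp only [hmdef]; omega
  have hm_top : Tendsto m atTop atTop := tendsto_atTop_mono hmn tendsto_id
  have hmR_top : Tendsto (fun n => (m n : ℝ)) atTop atTop :=
    tendsto_natCast_atTop_atTop.comp hm_top
  -- limit of n / m n  is  1 / M
  have hnm : Tendsto (fun n : ℕ => (n : ℝ) / (m n : ℝ)) atTop (𝓝 (1 / (M : ℝ))) := by
    have hden : Tendsto (fun n : ℕ => (M : ℝ) + ((M : ℝ) - 1) / n) atTop (𝓝 ((M : ℝ) + 0)) :=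
      tendsto_const_nhds.add (tendsto_const_nhds.div_atTop tendsto_natCast_atTop_atTop)
    rw [add_zero] at hden
    have h := hden.inv₀ hM0.ne'
    rw [show (M : ℝ)⁻¹ = 1 / (M : ℝ) by rw [one_div]] at h
    refine h.congr' ?_
    filter_upwards [eventually_ge_atTop 1] with n hn
    have hn0 : (0 : ℝ) < n := by exact_mod_cast hn
    have hmcast : (m n : ℝ) = (M : ℝ) * (n + 1) - 1 := by
      simp only [hmdef]
      have : 1 ≤ M * (n + 1) := Nat.one_le_iff_ne_zero.2 (by positivity)
      push_cast [this]
      ring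
    have hm0 : (0 : ℝ) < m n := by exact_mod_cast lt_of_lt_of_le (by exact_mod_cast hn) (hmn n)
    rw [hmcast] at hm0 ⊢
    have hA : (M : ℝ) + ((M : ℝ) - 1) / n = ((M : ℝ) * (n + 1) - 1) / n := by
      field_simp; ring
    rw [hA, inv_div]
  -- limit of (m n + 1)/ m n
  have hKm : Tendsto (fun n : ℕ => ((m n : ℝ) + 1) / (m n : ℝ)) atTop (𝓝 1) := by
    have h := tendsto_const_nhds.add hmR_top.inv_tendsto_atTop (f := fun _ : ℕ => (1:ℝ))
    rw [add_zero] at h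
    refine h.congr' ?_
    filter_upwards [eventually_ge_atTop 1] with n hn
    have hm0 : (0 : ℝ) < m n := by
      exact_mod_cast lt_of_lt_of_le (by exact_mod_cast hn) (hmn n)
    simp only [Pi.inv_apply]
    field_simp
  -- combined RHS limit
  have hB : Tendsto (fun n => Real.GammaSeq ((M : ℝ) * x + 1) (m n)) atTop
      (𝓝 (Real.Gamma ((M : ℝ) * x + 1))) :=
    (Real.GammaSeq_tendsto_Gamma _).comp hm_top
  have hrp : Tendsto (fun n : ℕ => ((n : ℝ) / (m n : ℝ)) ^ ((M : ℝ) * x)) atTop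
      (𝓝 ((1 / (M : ℝ)) ^ ((M : ℝ) * x))) :=
    hnm.rpow_const (Or.inr (by positivity))
  have h2 : Tendsto (fun n : ℕ => ((n : ℝ) / (m n : ℝ)) ^ ((M : ℝ) * x)
        * (((m n : ℝ) + 1) / (m n : ℝ)) * Real.GammaSeq ((M : ℝ) * x + 1) (m n)) atTop
      (𝓝 ((M : ℝ) ^ (-((M : ℝ) * x)) * Real.Gamma ((M : ℝ) * x + 1))) := by
    have := (hrp.mul hKm).mul hB
    rw [mul_one] at this
    convert this using 2
    rw [one_div, Real.inv_rpow hM0.le, ← Real.rpow_neg hM0.le]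
  have heq : (fun n : ℕ => ((n : ℝ) / (m n : ℝ)) ^ ((M : ℝ) * x)
        * (((m n : ℝ) + 1) / (m n : ℝ)) * Real.GammaSeq ((M : ℝ) * x + 1) (m n))
      =ᶠ[atTop] fun n =>
        ∏ r ∈ Ioc 0 M, Real.GammaSeq (x + r / M) n / Real.GammaSeq ((r : ℝ) / M) n := by
    filter_upwards [eventually_ge_atTop 1] with n hn
    rw [seq_eq M hM hx hn]
    have hc : (m n : ℝ) + 1 = ((M * (n + 1) : ℕ) : ℝ) := by
      have h1 : 1 ≤ M * (n + 1) := Nat.one_le_iff_ne_zero.2 (by positivity)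
      simp only [hmdef]
      push_cast [h1]
      ring
    simp only [hmdef] at hc ⊢
    rw [hc]
  have h1 : Tendsto (fun n => ∏ r ∈ Ioc 0 M,
        Real.GammaSeq (x + r / M) n / Real.GammaSeq ((r : ℝ) / M) n) atTop
      (𝓝 (∏ r ∈ Ioc 0 M, Real.Gamma (x + r / M) / Real.Gamma ((r : ℝ) / M))) := by
    refine tendsto_finset_prod _ fun r hr => ?_
    have hr0 : (0 : ℝ) < r := by exact_mod_cast (mem_Ioc.1 hr).1
    exact (Real.GammaSeq_tendsto_Gamma _).div (Real.GammaSeq_tendsto_Gamma _)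
      (Real.Gamma_pos_of_pos (by positivity)).ne'
  exact tendsto_nhds_unique h1 (h2.congr' heq)

lemma sub_one_dvd_totient {N p : ℕ} (hN : N ≠ 0) (hp : p.Prime) (hpN : p ∣ N) :
    (p - 1) ∣ N.totient := by
  have hk : 0 < N.factorization p := hp.factorization_pos_of_dvd hN hpN
  have hco : Nat.Coprime (p ^ N.factorization p) (ordCompl[p] N) :=
    Nat.Coprime.pow_left _ (Nat.coprime_ordCompl hp hN)
  conv_lhs => skip
  have := Nat.ordProj_mul_ordCompl_eq_self N p
  have h2 : N.totient = (p ^ N.factorization p).totient * (ordCompl[p] N).totient := by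
    conv_lhs => rw [← this]
    exact Nat.totient_mul hco
  rw [h2, Nat.totient_prime_pow hp hk]
  exact Dvd.dvd.mul_right (dvd_mul_left _ _) _

lemma inner_reindex {N d : ℕ} (hd : d ∣ N) (hd0 : 0 < d) (g : ℕ → ℝ) :
    ∑ s ∈ Ioc 0 (N / d), g (s * d) = ∑ r ∈ (Ioc 0 N).filter (fun r => d ∣ r), g r := by
  refine Finset.sum_nbij' (fun s => s * d) (fun r => r / d) ?_ ?_ ?_ ?_ ?_
  · intro s hs
    rw [mem_Ioc] at hs
    rw [mem_filter, mem_Ioc]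
    refine ⟨⟨Nat.mul_pos hs.1 hd0, ?_⟩, dvd_mul_left d s⟩
    calc s * d ≤ N / d * d := Nat.mul_le_mul_right d hs.2
      _ = N := Nat.div_mul_cancel hd
  · intro r hr
    rw [mem_filter, mem_Ioc] at hr
    rw [mem_Ioc]
    exact ⟨Nat.div_pos (Nat.le_of_dvd hr.1.1 hr.2) hd0, Nat.div_le_div_right hr.1.2⟩
  · intro s _; exact Nat.mul_div_cancel s hd0
  · intro r hr
    rw [mem_filter] at hr
    exact Nat.div_mul_cancel hr.2
  · intro s _; rfl

lemma moebius_sum (N : ℕ) (hN : 2 ≤ N) (g : ℕ → ℝ) :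
    ∑ r ∈ (Icc 1 N).filter (fun r => Nat.Coprime r N), g r
      = ∑ J ∈ N.primeFactors.powerset,
          (-1 : ℝ) ^ J.card * ∑ s ∈ Ioc 0 (N / ∏ p ∈ J, p), g (s * ∏ p ∈ J, p) := by
  have hN0 : N ≠ 0 := by omega
  have hdvd : ∀ J ∈ N.primeFactors.powerset, (∏ p ∈ J, p) ∣ N := by
    intro J hJ
    rw [mem_powerset] at hJ
    exact Finset.prod_primes_dvd N
      (fun p hp => (Nat.prime_of_mem_primeFactors (hJ hp)).prime)
      (fun p hp => Nat.dvd_of_mem_primeFactors (hJ hp))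
  have hpos : ∀ J ∈ N.primeFactors.powerset, 0 < ∏ p ∈ J, p := by
    intro J hJ
    rw [mem_powerset] at hJ
    exact Finset.prod_pos fun p hp => (Nat.prime_of_mem_primeFactors (hJ hp)).pos
  have key : ∀ r ∈ Ioc 0 N,
      (∑ J ∈ N.primeFactors.powerset, if (∏ p ∈ J, p) ∣ r then (-1 : ℝ) ^ J.card * g r else 0)
        = if Nat.Coprime r N then g r else 0 := by
    intro r hr
    rw [mem_Ioc] at hr
    have hr0 : r ≠ 0 := by omega
    have hcond : ∀ J ∈ N.primeFactors.powerset, ((∏ p ∈ J, p) ∣ r ↔ J ⊆ r.primeFactors) := by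
      intro J hJ
      rw [mem_powerset] at hJ
      constructor
      · intro h p hp
        exact Nat.mem_primeFactors.2 ⟨Nat.prime_of_mem_primeFactors (hJ hp),
          dvd_trans (Finset.dvd_prod_of_mem _ hp) h, hr0⟩
      · intro h
        exact Finset.prod_primes_dvd r
          (fun p hp => (Nat.prime_of_mem_primeFactors (hJ hp)).prime)
          (fun p hp => Nat.dvd_of_mem_primeFactors (h hp))
    have hco : ∀ J ∈ N.primeFactors.powerset,
        (if (∏ p ∈ J, p) ∣ r then (-1 : ℝ) ^ J.card * g r else 0)
          = if J ⊆ r.primeFactors then (-1 : ℝ) ^ J.card * g r else 0 :=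
      fun J hJ => if_congr (hcond J hJ) rfl rfl
    rw [Finset.sum_congr rfl hco, ← Finset.sum_filter]
    have hps : (N.primeFactors.powerset.filter fun J => J ⊆ r.primeFactors)
        = (N.primeFactors ∩ r.primeFactors).powerset := by
      ext J
      rw [mem_filter, mem_powerset, mem_powerset, subset_inter_iff]
    rw [hps, ← Finset.sum_mul]
    have hsum : (∑ J ∈ (N.primeFactors ∩ r.primeFactors).powerset, (-1 : ℝ) ^ J.card)
        = if N.primeFactors ∩ r.primeFactors = ∅ then 1 else 0 := by
      have h := Finset.sum_powerset_neg_one_pow_card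
        (x := N.primeFactors ∩ r.primeFactors)
      calc (∑ J ∈ (N.primeFactors ∩ r.primeFactors).powerset, (-1 : ℝ) ^ J.card)
          = ((∑ J ∈ (N.primeFactors ∩ r.primeFactors).powerset, (-1 : ℤ) ^ J.card : ℤ) : ℝ) := by
            push_cast; rfl
        _ = _ := by rw [h]; split <;> norm_num
    rw [hsum]
    have hcop : (N.primeFactors ∩ r.primeFactors = ∅) ↔ Nat.Coprime r N := by
      rw [← disjoint_iff_inter_eq_empty, Nat.disjoint_primeFactors hN0 hr0, Nat.coprime_comm]
    split_ifs with h1 h2 h2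
    · rw [one_mul]
    · exact absurd (hcop.1 h1) h2
    · exact absurd (hcop.2 h2) h1
    · rw [zero_mul]
  have hIcc : Icc 1 N = Ioc 0 N := by
    rw [← Finset.Icc_add_one_left_eq_Ioc]; rfl
  calc ∑ r ∈ (Icc 1 N).filter (fun r => Nat.Coprime r N), g r
      = ∑ r ∈ Ioc 0 N, if Nat.Coprime r N then g r else 0 := by
        rw [hIcc, Finset.sum_filter]
    _ = ∑ r ∈ Ioc 0 N, ∑ J ∈ N.primeFactors.powerset,
          (if (∏ p ∈ J, p) ∣ r then (-1 : ℝ) ^ J.card * g r else 0) :=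
        Finset.sum_congr rfl fun r hr => (key r hr).symm
    _ = ∑ J ∈ N.primeFactors.powerset, ∑ r ∈ Ioc 0 N,
          (if (∏ p ∈ J, p) ∣ r then (-1 : ℝ) ^ J.card * g r else 0) := Finset.sum_comm
    _ = _ := by
        refine Finset.sum_congr rfl fun J hJ => ?_
        rw [← Finset.sum_filter, ← Finset.mul_sum, inner_reindex (hdvd J hJ) (hpos J hJ) g]

lemma powerset_expand (S : Finset ℕ) :
    ∑ J ∈ S.powerset, (-1 : ℝ) ^ J.card * ∏ p ∈ J, ((p : ℝ))⁻¹
      = ∏ p ∈ S, (1 - ((p : ℝ))⁻¹) := by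
  have h := Finset.prod_add (fun p : ℕ => -((p : ℝ))⁻¹) (fun _ => (1 : ℝ)) S
  have h2 : ∀ p ∈ S, -((p : ℝ))⁻¹ + 1 = 1 - ((p : ℝ))⁻¹ := fun p _ => by ring
  rw [Finset.prod_congr rfl h2] at h
  rw [h]
  refine Finset.sum_congr rfl fun J hJ => ?_
  rw [Finset.prod_const_one, mul_one]
  have : ∀ p ∈ J, -((p : ℝ))⁻¹ = (-1) * ((p : ℝ))⁻¹ := fun p _ => by ring
  rw [Finset.prod_congr rfl this, Finset.prod_mul_distrib, Finset.prod_const]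

lemma totient_real (N : ℕ) (hN : N ≠ 0) :
    (N.totient : ℝ) = N * ∏ p ∈ N.primeFactors, (1 - ((p : ℝ))⁻¹) := by
  have hp1 : ∀ p ∈ N.primeFactors, (0 : ℝ) < p := fun p hp => by
    exact_mod_cast (Nat.prime_of_mem_primeFactors hp).pos
  have hprodpos : 0 < ∏ p ∈ N.primeFactors, (p : ℝ) := prod_pos hp1
  have key : (N.totient : ℝ) * ∏ p ∈ N.primeFactors, (p : ℝ)
      = (N : ℝ) * ∏ p ∈ N.primeFactors, ((p : ℝ) - 1) := by
    have h := Nat.totient_mul_prod_primeFactors N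
    calc (N.totient : ℝ) * ∏ p ∈ N.primeFactors, (p : ℝ)
        = ((N.totient * ∏ p ∈ N.primeFactors, p : ℕ) : ℝ) := by push_cast; ring
      _ = ((N * ∏ p ∈ N.primeFactors, (p - 1) : ℕ) : ℝ) := by rw [h]
      _ = (N : ℝ) * ∏ p ∈ N.primeFactors, ((p : ℝ) - 1) := by
          rw [Nat.cast_mul, Nat.cast_prod]
          refine congrArg _ (Finset.prod_congr rfl fun p hp => ?_)
          have h1 : 1 ≤ p := (Nat.prime_of_mem_primeFactors hp).one_le
          push_cast [h1]
          ring
  have h3 : ∏ p ∈ N.primeFactors, (1 - ((p : ℝ))⁻¹)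
      = (∏ p ∈ N.primeFactors, ((p : ℝ) - 1)) / ∏ p ∈ N.primeFactors, (p : ℝ) := by
    rw [← Finset.prod_div_distrib]
    refine Finset.prod_congr rfl fun p hp => ?_
    have := hp1 p hp
    field_simp
  rw [h3, mul_div_assoc', eq_div_iff hprodpos.ne', key]

lemma const_sum (N : ℕ) (hN : 2 ≤ N) :
    ∑ J ∈ N.primeFactors.powerset, (-1 : ℝ) ^ J.card *
        (((N / ∏ p ∈ J, p : ℕ) : ℝ) * Real.log ((N / ∏ p ∈ J, p : ℕ) : ℝ))
      = N.totient * Real.log N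
        + ∑ q ∈ N.primeFactors, ((N.totient / (q - 1) : ℕ) : ℝ) * Real.log q := by
  have hN0 : N ≠ 0 := by omega
  have hNR : (0 : ℝ) < N := by exact_mod_cast Nat.pos_of_ne_zero hN0
  set T := N.primeFactors with hT
  have hdvd : ∀ J ∈ T.powerset, (∏ p ∈ J, p) ∣ N := by
    intro J hJ
    rw [mem_powerset] at hJ
    exact Finset.prod_primes_dvd N
      (fun p hp => (Nat.prime_of_mem_primeFactors (hJ hp)).prime)
      (fun p hp => Nat.dvd_of_mem_primeFactors (hJ hp))
  have hpos0 : ∀ J ∈ T.powerset, 0 < ∏ p ∈ J, p := by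
    intro J hJ
    rw [mem_powerset] at hJ
    exact Finset.prod_pos fun p hp => (Nat.prime_of_mem_primeFactors (hJ hp)).pos
  have hposR : ∀ J ∈ T.powerset, ∀ p ∈ J, (0 : ℝ) < p := by
    intro J hJ p hp
    rw [mem_powerset] at hJ
    exact_mod_cast (Nat.prime_of_mem_primeFactors (hJ hp)).pos
  have hne : ∀ J ∈ T.powerset, (((∏ p ∈ J, p : ℕ) : ℕ) : ℝ) ≠ 0 := by
    intro J hJ
    exact_mod_cast (hpos0 J hJ).ne'
  have hcast : ∀ J ∈ T.powerset,
      ((N / ∏ p ∈ J, p : ℕ) : ℝ) = (N : ℝ) * ∏ p ∈ J, ((p : ℝ))⁻¹ := by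
    intro J hJ
    rw [Nat.cast_div (hdvd J hJ) (hne J hJ), Nat.cast_prod, Finset.prod_inv_distrib,
      div_eq_mul_inv]
  have hlog : ∀ J ∈ T.powerset,
      Real.log ((N / ∏ p ∈ J, p : ℕ) : ℝ) = Real.log N - ∑ p ∈ J, Real.log p := by
    intro J hJ
    rw [Nat.cast_div (hdvd J hJ) (hne J hJ), Nat.cast_prod,
      Real.log_div hNR.ne' (Finset.prod_pos (hposR J hJ)).ne',
      Real.log_prod (fun p hp => (hposR J hJ p hp).ne')]
  -- decompose the summand
  have hterm : ∀ J ∈ T.powerset,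
      (-1 : ℝ) ^ J.card * (((N / ∏ p ∈ J, p : ℕ) : ℝ) * Real.log ((N / ∏ p ∈ J, p : ℕ) : ℝ))
        = ((-1 : ℝ) ^ J.card * ∏ p ∈ J, ((p : ℝ))⁻¹) * ((N : ℝ) * Real.log N)
          - (N : ℝ) * ((-1 : ℝ) ^ J.card * (∏ p ∈ J, ((p : ℝ))⁻¹) * ∑ p ∈ J, Real.log p) := by
    intro J hJ
    rw [hlog J hJ, hcast J hJ]
    ring
  rw [Finset.sum_congr rfl hterm, Finset.sum_sub_distrib, ← Finset.sum_mul, ← Finset.mul_sum,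
    powerset_expand]
  -- first piece = φ log N
  have hfirst : (∏ p ∈ T, (1 - ((p : ℝ))⁻¹)) * ((N : ℝ) * Real.log N)
      = (N.totient : ℝ) * Real.log N := by
    rw [totient_real N hN0, ← hT]
    ring
  rw [hfirst]
  -- second piece: swap the double sum
  have hswap : ∑ J ∈ T.powerset, (-1 : ℝ) ^ J.card * (∏ p ∈ J, ((p : ℝ))⁻¹) * ∑ p ∈ J, Real.log p
      = ∑ q ∈ T, Real.log q *
          ∑ J ∈ T.powerset, (if q ∈ J then (-1 : ℝ) ^ J.card * ∏ p ∈ J, ((p : ℝ))⁻¹ else 0) := by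
    have h1 : ∀ J ∈ T.powerset,
        (-1 : ℝ) ^ J.card * (∏ p ∈ J, ((p : ℝ))⁻¹) * ∑ p ∈ J, Real.log p
          = ∑ q ∈ T, (if q ∈ J then Real.log q * ((-1 : ℝ) ^ J.card * ∏ p ∈ J, ((p : ℝ))⁻¹)
              else 0) := by
      intro J hJ
      rw [mem_powerset] at hJ
      rw [Finset.sum_ite_mem, Finset.inter_eq_right.2 hJ, Finset.mul_sum]
      exact Finset.sum_congr rfl fun q _ => by ring
    calc ∑ J ∈ T.powerset, (-1 : ℝ) ^ J.card * (∏ p ∈ J, ((p : ℝ))⁻¹) * ∑ p ∈ J, Real.log p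
        = ∑ J ∈ T.powerset, ∑ q ∈ T,
            (if q ∈ J then Real.log q * ((-1 : ℝ) ^ J.card * ∏ p ∈ J, ((p : ℝ))⁻¹) else 0) :=
          Finset.sum_congr rfl h1
      _ = ∑ q ∈ T, ∑ J ∈ T.powerset,
            (if q ∈ J then Real.log q * ((-1 : ℝ) ^ J.card * ∏ p ∈ J, ((p : ℝ))⁻¹) else 0) :=
          Finset.sum_comm
      _ = _ := by
          refine Finset.sum_congr rfl fun q _ => ?_
          rw [Finset.mul_sum]
          exact Finset.sum_congr rfl fun J _ => by rw [mul_ite, mul_zero]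
  -- inner sum for fixed q
  have hu : ∀ q ∈ T,
      (∑ J ∈ T.powerset, if q ∈ J then (-1 : ℝ) ^ J.card * ∏ p ∈ J, ((p : ℝ))⁻¹ else 0)
        = -((q : ℝ))⁻¹ * ∏ p ∈ T.erase q, (1 - ((p : ℝ))⁻¹) := by
    intro q hq
    have hqe : q ∉ T.erase q := notMem_erase q T
    have hqT : insert q (T.erase q) = T := insert_erase hq
    conv_lhs => rw [← hqT]
    rw [Finset.sum_powerset_insert hqe]
    have h1 : ∑ t ∈ (T.erase q).powerset,
        (if q ∈ t then (-1 : ℝ) ^ t.card * ∏ p ∈ t, ((p : ℝ))⁻¹ else 0) = 0 :=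
      Finset.sum_eq_zero fun t ht => if_neg fun hqt => hqe (Finset.mem_powerset.1 ht hqt)
    rw [h1, zero_add]
    have h2 : ∀ t ∈ (T.erase q).powerset,
        (if q ∈ insert q t then (-1 : ℝ) ^ (insert q t).card * ∏ p ∈ insert q t, ((p : ℝ))⁻¹
            else 0)
          = -((q : ℝ))⁻¹ * ((-1 : ℝ) ^ t.card * ∏ p ∈ t, ((p : ℝ))⁻¹) := by
      intro t ht
      have hqt : q ∉ t := fun hqt => hqe (Finset.mem_powerset.1 ht hqt)
      rw [if_pos (mem_insert_self q t), Finset.card_insert_of_notMem hqt,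
        Finset.prod_insert hqt, pow_succ]
      ring
    rw [Finset.sum_congr rfl h2, ← Finset.mul_sum, powerset_expand]
  rw [hswap, Finset.sum_congr rfl fun q hq => by rw [hu q hq]]
  -- final arithmetic per prime
  have hq_val : ∀ q ∈ T, (N : ℝ) * (Real.log q * (-((q : ℝ))⁻¹ *
        ∏ p ∈ T.erase q, (1 - ((p : ℝ))⁻¹)))
      = -(((N.totient / (q - 1) : ℕ) : ℝ) * Real.log q) := by
    intro q hq
    have hprime := Nat.prime_of_mem_primeFactors hq
    have hq1 : (1 : ℝ) < q := by exact_mod_cast hprime.one_lt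
    have hq0 : (0 : ℝ) < q := lt_trans one_pos hq1
    have hdv : (q - 1) ∣ N.totient :=
      sub_one_dvd_totient hN0 hprime (Nat.dvd_of_mem_primeFactors hq)
    have hcq : (((q - 1 : ℕ)) : ℝ) = (q : ℝ) - 1 := by
      push_cast [hprime.one_le]
      ring
    have hcd : (((N.totient / (q - 1) : ℕ)) : ℝ) = (N.totient : ℝ) / ((q : ℝ) - 1) := by
      rw [Nat.cast_div hdv (by rw [hcq]; exact sub_ne_zero.2 hq1.ne'), hcq]
    have hqe : q ∉ T.erase q := notMem_erase q T
    have hqT : insert q (T.erase q) = T := insert_erase hq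
    have hphi : (N.totient : ℝ) = (N : ℝ) * ((1 - ((q : ℝ))⁻¹) *
        ∏ p ∈ T.erase q, (1 - ((p : ℝ))⁻¹)) := by
      rw [totient_real N hN0, ← hT]
      conv_lhs => rw [← hqT, Finset.prod_insert hqe]
    have hsub : (q : ℝ) - 1 ≠ 0 := sub_ne_zero.2 hq1.ne'
    rw [hcd, hphi]
    field_simp
  rw [Finset.mul_sum, Finset.sum_congr rfl hq_val, Finset.sum_neg_distrib, sub_neg_eq_add]
lemma log_CN (N : ℕ) (hN : 2 ≤ N) :
    Real.log (CN N) = N.totient * Real.log N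
      + ∑ q ∈ N.primeFactors, ((N.totient / (q - 1) : ℕ) : ℝ) * Real.log q := by
  have hN0 : N ≠ 0 := by omega
  have hNR : (0 : ℝ) < N := by exact_mod_cast Nat.pos_of_ne_zero hN0
  have hppos : ∀ p ∈ N.primeFactors, (0 : ℝ) < p := fun p hp => by
    exact_mod_cast (Nat.prime_of_mem_primeFactors hp).pos
  have hc : ((CN N : ℕ) : ℝ)
      = (N : ℝ) ^ N.totient * ∏ p ∈ N.primeFactors, (p : ℝ) ^ (N.totient / (p - 1)) := by
    rw [CN]
    push_cast
    rfl
  have hprodne : (0 : ℝ) < ∏ p ∈ N.primeFactors, (p : ℝ) ^ (N.totient / (p - 1)) :=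
    Finset.prod_pos fun p hp => by have := hppos p hp; positivity
  rw [hc, Real.log_mul (pow_pos hNR _).ne' hprodne.ne', Real.log_pow,
    Real.log_prod (fun p hp => by have := hppos p hp; positivity)]
  congr 1
  exact Finset.sum_congr rfl fun p hp => by rw [Real.log_pow]

/-- Gamma-function identity (Krattenthaler–Rivoal, Eq. (rajout3)): for `N ≥ 2` and real
`x ≥ 0`,
`C_N^x · (∏_j Γ(x + r_j/N)/Γ(r_j/N)) / Γ(x+1)^{φ(N)} = (∏_j Γ(α_j x + 1))/(∏_j Γ(β_j x + 1))`,
where `r_1, …, r_{φ(N)}` are the elements of `{1, …, N}` coprime to `N` and the list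
`β` carries `φ(N)` padded entries `1`, contributing `Γ(x+1)^{φ(N)}` to the denominator. -/
theorem gamma_identity (N : ℕ) (hN : 2 ≤ N) (x : ℝ) (hx : 0 ≤ x) :
    (CN N : ℝ) ^ x *
        (∏ r ∈ (Finset.Icc 1 N).filter fun r => Nat.Coprime r N,
          Real.Gamma (x + (r : ℝ) / N) / Real.Gamma ((r : ℝ) / N)) /
        (Real.Gamma (x + 1)) ^ N.totient
      = (∏ J ∈ evenSub N, Real.Gamma (((N / ∏ p ∈ J, p : ℕ) : ℝ) * x + 1)) /
        ((∏ J ∈ oddSub N, Real.Gamma (((N / ∏ p ∈ J, p : ℕ) : ℝ) * x + 1)) *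
          (Real.Gamma (x + 1)) ^ N.totient) := by
  have hN0 : N ≠ 0 := by omega
  have hNR : (0 : ℝ) < N := by exact_mod_cast Nat.pos_of_ne_zero hN0
  set T := N.primeFactors with hT
  have hdvd : ∀ J ∈ T.powerset, (∏ p ∈ J, p) ∣ N := by
    intro J hJ
    rw [mem_powerset] at hJ
    exact Finset.prod_primes_dvd N
      (fun p hp => (Nat.prime_of_mem_primeFactors (hJ hp)).prime)
      (fun p hp => Nat.dvd_of_mem_primeFactors (hJ hp))
  have hpos0 : ∀ J ∈ T.powerset, 0 < ∏ p ∈ J, p := by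
    intro J hJ
    rw [mem_powerset] at hJ
    exact Finset.prod_pos fun p hp => (Nat.prime_of_mem_primeFactors (hJ hp)).pos
  have hMpos : ∀ J ∈ T.powerset, 0 < N / ∏ p ∈ J, p := fun J hJ =>
    Nat.div_pos (Nat.le_of_dvd (Nat.pos_of_ne_zero hN0) (hdvd J hJ)) (hpos0 J hJ)
  -- positivity of all Gamma values
  have hG1 : (0 : ℝ) < Real.Gamma (x + 1) := Real.Gamma_pos_of_pos (by linarith)
  have hGJ : ∀ J ∈ T.powerset, (0 : ℝ) < Real.Gamma (((N / ∏ p ∈ J, p : ℕ) : ℝ) * x + 1) := by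
    intro J hJ
    have h1 : (0 : ℝ) ≤ ((N / ∏ p ∈ J, p : ℕ) : ℝ) := Nat.cast_nonneg _
    have h2 : (0 : ℝ) ≤ ((N / ∏ p ∈ J, p : ℕ) : ℝ) * x := mul_nonneg h1 hx
    exact Real.Gamma_pos_of_pos (by linarith)
  have hGr : ∀ r ∈ (Finset.Icc 1 N).filter fun r => Nat.Coprime r N,
      (0 : ℝ) < Real.Gamma (x + (r : ℝ) / N) / Real.Gamma ((r : ℝ) / N) := by
    intro r hr
    have hr1 : (0 : ℝ) < r := by
      rw [mem_filter, mem_Icc] at hr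
      exact_mod_cast hr.1.1
    have h1 : (0 : ℝ) < (r : ℝ) / N := by positivity
    exact div_pos (Real.Gamma_pos_of_pos (by positivity)) (Real.Gamma_pos_of_pos h1)
  have hprodR : (0 : ℝ) < ∏ r ∈ (Finset.Icc 1 N).filter fun r => Nat.Coprime r N,
      Real.Gamma (x + (r : ℝ) / N) / Real.Gamma ((r : ℝ) / N) := prod_pos hGr
  have hCN : (0 : ℝ) < (CN N : ℝ) := by
    have : 0 < CN N :=
      Nat.mul_pos (Nat.pow_pos (Nat.pos_of_ne_zero hN0))
        (Finset.prod_pos fun p hp => Nat.pow_pos (Nat.prime_of_mem_primeFactors hp).pos)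
    exact_mod_cast this
  have hCNx : (0 : ℝ) < (CN N : ℝ) ^ x := Real.rpow_pos_of_pos hCN x
  have hE : (0 : ℝ) < ∏ J ∈ evenSub N, Real.Gamma (((N / ∏ p ∈ J, p : ℕ) : ℝ) * x + 1) :=
    prod_pos fun J hJ => hGJ J (Finset.mem_filter.1 hJ).1
  have hO : (0 : ℝ) < ∏ J ∈ oddSub N, Real.Gamma (((N / ∏ p ∈ J, p : ℕ) : ℝ) * x + 1) :=
    prod_pos fun J hJ => hGJ J (Finset.mem_filter.1 hJ).1
  have hGP : (0 : ℝ) < Real.Gamma (x + 1) ^ N.totient := pow_pos hG1 _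
  have hL : (0 : ℝ) < (CN N : ℝ) ^ x *
      (∏ r ∈ (Finset.Icc 1 N).filter fun r => Nat.Coprime r N,
        Real.Gamma (x + (r : ℝ) / N) / Real.Gamma ((r : ℝ) / N)) /
      (Real.Gamma (x + 1)) ^ N.totient := by positivity
  have hR : (0 : ℝ) < (∏ J ∈ evenSub N, Real.Gamma (((N / ∏ p ∈ J, p : ℕ) : ℝ) * x + 1)) /
      ((∏ J ∈ oddSub N, Real.Gamma (((N / ∏ p ∈ J, p : ℕ) : ℝ) * x + 1)) *
        (Real.Gamma (x + 1)) ^ N.totient) := by positivity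
  rw [← Real.exp_log hL, ← Real.exp_log hR]
  congr 1
  simp only [evenSub, oddSub]
  simp only [evenSub, oddSub] at hE hO
  -- compute log of LHS
  rw [Real.log_div (by positivity) hGP.ne', Real.log_mul hCNx.ne' hprodR.ne',
    Real.log_rpow hCN, Real.log_pow,
    Real.log_prod (fun r hr => (hGr r hr).ne'),
    Real.log_div hE.ne' (mul_pos hO hGP).ne', Real.log_mul hO.ne' hGP.ne',
    Real.log_prod (fun J hJ => (hGJ J (Finset.mem_filter.1 hJ).1).ne'),
    Real.log_prod (fun J hJ => (hGJ J (Finset.mem_filter.1 hJ).1).ne'),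
    Real.log_pow]
  -- the Möbius step
  have hmob := moebius_sum N hN
    (fun r => Real.log (Real.Gamma (x + (r : ℝ) / N)) - Real.log (Real.Gamma ((r : ℝ) / N)))
  have hlogdiv : ∀ r ∈ (Finset.Icc 1 N).filter fun r => Nat.Coprime r N,
      Real.log (Real.Gamma (x + (r : ℝ) / N) / Real.Gamma ((r : ℝ) / N))
        = Real.log (Real.Gamma (x + (r : ℝ) / N)) - Real.log (Real.Gamma ((r : ℝ) / N)) := by
    intro r hr
    have hr1 : (0 : ℝ) < r := by
      rw [mem_filter, mem_Icc] at hr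
      exact_mod_cast hr.1.1
    have h1 : (0 : ℝ) < (r : ℝ) / N := by positivity
    exact Real.log_div (Real.Gamma_pos_of_pos (by positivity)).ne'
      (Real.Gamma_pos_of_pos h1).ne'
  rw [Finset.sum_congr rfl hlogdiv, hmob]
  -- evaluate inner sums via the Gauss multiplication lemma
  have key2 : ∀ J ∈ T.powerset,
      (∑ s ∈ Ioc 0 (N / ∏ p ∈ J, p),
          (Real.log (Real.Gamma (x + ((s * ∏ p ∈ J, p : ℕ) : ℝ) / N))
            - Real.log (Real.Gamma (((s * ∏ p ∈ J, p : ℕ) : ℝ) / N))))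
        = -(((N / ∏ p ∈ J, p : ℕ) : ℝ) * x * Real.log ((N / ∏ p ∈ J, p : ℕ) : ℝ))
          + Real.log (Real.Gamma (((N / ∏ p ∈ J, p : ℕ) : ℝ) * x + 1)) := by
    intro J hJ
    set M := N / ∏ p ∈ J, p with hM
    have hM1 : 1 ≤ M := hMpos J hJ
    have hMR : (0 : ℝ) < M := by exact_mod_cast hM1
    have hsM : ∀ s : ℕ, ((s * ∏ p ∈ J, p : ℕ) : ℝ) / N = (s : ℝ) / M := by
      intro s
      have hNM : ((∏ p ∈ J, p) : ℕ) * M = N := Nat.mul_div_cancel' (hdvd J hJ) 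
      have hd0 : (0 : ℝ) < ((∏ p ∈ J, p : ℕ) : ℝ) := by exact_mod_cast hpos0 J hJ
      have hd0' : (0 : ℝ) < ∏ i ∈ J, (i : ℝ) := by
        rw [← Nat.cast_prod]; exact hd0
      rw [← hNM]
      push_cast
      rw [mul_comm (s : ℝ), mul_div_mul_left _ _ hd0'.ne']
    have hsum : ∀ s ∈ Ioc 0 M,
        Real.log (Real.Gamma (x + ((s * ∏ p ∈ J, p : ℕ) : ℝ) / N))
            - Real.log (Real.Gamma (((s * ∏ p ∈ J, p : ℕ) : ℝ) / N))
          = Real.log (Real.Gamma (x + (s : ℝ) / M) / Real.Gamma ((s : ℝ) / M)) := by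
      intro s hs
      have hs1 : (0 : ℝ) < s := by exact_mod_cast (mem_Ioc.1 hs).1
      have h1 : (0 : ℝ) < (s : ℝ) / M := by positivity
      rw [hsM s, Real.log_div (Real.Gamma_pos_of_pos (by positivity)).ne'
        (Real.Gamma_pos_of_pos h1).ne']
    rw [Finset.sum_congr rfl hsum, ← Real.log_prod
      (fun s hs => by
        have hs1 : (0 : ℝ) < s := by exact_mod_cast (mem_Ioc.1 hs).1
        have h1 : (0 : ℝ) < (s : ℝ) / M := by positivity
        exact (div_pos (Real.Gamma_pos_of_pos (by positivity))
          (Real.Gamma_pos_of_pos h1)).ne'),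
      gauss M hM1 hx,
      Real.log_mul (Real.rpow_pos_of_pos hMR _).ne'
        (Real.Gamma_pos_of_pos (by positivity)).ne',
      Real.log_rpow hMR]
    ring
  rw [Finset.sum_congr rfl fun J hJ => by rw [key2 J hJ]]
  -- split the alternating sum into the constant part and the Gamma part
  have hsplit : ∑ J ∈ T.powerset, (-1 : ℝ) ^ J.card *
        (-(((N / ∏ p ∈ J, p : ℕ) : ℝ) * x * Real.log ((N / ∏ p ∈ J, p : ℕ) : ℝ))
          + Real.log (Real.Gamma (((N / ∏ p ∈ J, p : ℕ) : ℝ) * x + 1)))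
      = (-x) * (∑ J ∈ T.powerset, (-1 : ℝ) ^ J.card *
            (((N / ∏ p ∈ J, p : ℕ) : ℝ) * Real.log ((N / ∏ p ∈ J, p : ℕ) : ℝ)))
        + ∑ J ∈ T.powerset, (-1 : ℝ) ^ J.card *
            Real.log (Real.Gamma (((N / ∏ p ∈ J, p : ℕ) : ℝ) * x + 1)) := by
    rw [Finset.mul_sum, ← Finset.sum_add_distrib]
    exact Finset.sum_congr rfl fun J _ => by ring
  rw [hsplit, const_sum N hN, log_CN N hN]
  -- parity split of the Gamma part
  have hpar : ∑ J ∈ T.powerset, (-1 : ℝ) ^ J.card *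
        Real.log (Real.Gamma (((N / ∏ p ∈ J, p : ℕ) : ℝ) * x + 1))
      = (∑ J ∈ T.powerset.filter fun J => Even J.card,
            Real.log (Real.Gamma (((N / ∏ p ∈ J, p : ℕ) : ℝ) * x + 1)))
        - ∑ J ∈ T.powerset.filter fun J => Odd J.card,
            Real.log (Real.Gamma (((N / ∏ p ∈ J, p : ℕ) : ℝ) * x + 1)) := by
    rw [← Finset.sum_filter_add_sum_filter_not T.powerset (fun J => Even J.card)]
    have he : ∀ J ∈ T.powerset.filter fun J => Even J.card,
        (-1 : ℝ) ^ J.card * Real.log (Real.Gamma (((N / ∏ p ∈ J, p : ℕ) : ℝ) * x + 1))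
          = Real.log (Real.Gamma (((N / ∏ p ∈ J, p : ℕ) : ℝ) * x + 1)) := by
      intro J hJ
      rw [(Finset.mem_filter.1 hJ).2.neg_one_pow, one_mul]
    have hfo : (T.powerset.filter fun J => ¬Even J.card)
        = T.powerset.filter fun J => Odd J.card := by
      refine Finset.filter_congr fun J _ => ?_
      rw [Nat.not_even_iff_odd]
    have ho : ∀ J ∈ T.powerset.filter fun J => Odd J.card,
        (-1 : ℝ) ^ J.card * Real.log (Real.Gamma (((N / ∏ p ∈ J, p : ℕ) : ℝ) * x + 1))
          = -Real.log (Real.Gamma (((N / ∏ p ∈ J, p : ℕ) : ℝ) * x + 1)) := by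
      intro J hJ
      rw [(Finset.mem_filter.1 hJ).2.neg_one_pow, neg_one_mul]
    rw [Finset.sum_congr rfl he, hfo, Finset.sum_congr rfl ho, Finset.sum_neg_distrib]
    ring
  rw [hpar]
  ring
end

section
/- For every prime p and every non-negative integer J, the p-adic valuation of the rational number p·H_J − H_{⌊J/p⌋} is at least 1, i.e., p·H_J ≡ H_{⌊J/p⌋} (mod pℤ_p). -/
/-- The `n`-th harmonic number `H_n = 1 + 1/2 + ⋯ + 1/n`, as a rational (`H_0 = 0`). -/
def harm (n : ℕ) : ℚ := ∑ i ∈ Finset.range n, (1 : ℚ) / (i + 1)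

lemma harm_eq_Icc (n : ℕ) : harm n = ∑ i ∈ Finset.Icc 1 n, (1 : ℚ) / i := by
  rw [harm, ← Finset.Ico_add_one_right_eq_Icc, Finset.sum_Ico_eq_sum_range]
  simp only [Nat.add_sub_cancel]
  refine Finset.sum_congr rfl fun i _ => ?_
  push_cast
  ring_nf

/-- For every prime `p` and every `J ≥ 0`, `p·H_J ≡ H_{⌊J/p⌋} (mod pℤ_p)`: the rational
number `p·H_J − H_{⌊J/p⌋}` has `p`-adic norm at most `1/p`. -/
theorem p_mul_harm_sub_harm_div_mem_p_zp (p : ℕ) [hp : Fact p.Prime] (J : ℕ) :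
    ‖(((p : ℚ) * harm J - harm (J / p) : ℚ) : ℚ_[p])‖ ≤ ((p : ℝ))⁻¹ := by
  have hp1 : 1 < p := hp.out.one_lt
  have hp0 : (0:ℕ) < p := hp.out.pos
  -- divisible part equals harm (J/p)
  have hdiv : ∑ i ∈ (Finset.Icc 1 J).filter (fun i => p ∣ i), (p : ℚ) * (1 / i)
      = harm (J / p) := by
    rw [harm_eq_Icc]
    refine Finset.sum_nbij' (fun i => i / p) (fun k => p * k) ?_ ?_ ?_ ?_ ?_
    · intro i hi
      simp only [Finset.mem_filter, Finset.mem_Icc] at hi ⊢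
      obtain ⟨⟨h1, h2⟩, hd⟩ := hi
      have hpi : p ≤ i := Nat.le_of_dvd (by omega) hd
      exact ⟨(Nat.one_le_div_iff hp0).mpr hpi, Nat.div_le_div_right h2⟩
    · intro k hk
      simp only [Finset.mem_Icc] at hk
      simp only [Finset.mem_filter, Finset.mem_Icc]
      refine ⟨⟨by nlinarith [hk.1], ?_⟩, Dvd.intro k rfl⟩
      calc p * k ≤ p * (J / p) := Nat.mul_le_mul_left p hk.2
        _ ≤ J := Nat.mul_div_le J p
    · intro i hi
      simp only [Finset.mem_filter] at hi
      exact Nat.mul_div_cancel' hi.2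
    · intro k _
      exact Nat.mul_div_cancel_left k hp0
    · intro i hi
      simp only [Finset.mem_filter, Finset.mem_Icc] at hi
      obtain ⟨⟨h1, _⟩, hd⟩ := hi
      obtain ⟨k, rfl⟩ := hd
      have hk : k ≠ 0 := by rintro rfl; omega
      simp only [Nat.mul_div_cancel_left k hp0]
      push_cast
      field_simp
  -- key identity
  have key : (p : ℚ) * harm J - harm (J / p)
      = ∑ i ∈ (Finset.Icc 1 J).filter (fun i => ¬ p ∣ i), (p : ℚ) * (1 / i) := by
    rw [harm_eq_Icc, Finset.mul_sum, ← hdiv,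
      ← Finset.sum_filter_add_sum_filter_not (Finset.Icc 1 J) (fun i => p ∣ i)
        (fun i => (p : ℚ) * (1 / i))]
    ring
  rw [key]
  push_cast
  refine IsUltrametricDist.norm_sum_le_of_forall_le_of_nonneg (by positivity) fun i hi => ?_
  simp only [Finset.mem_filter, Finset.mem_Icc] at hi
  obtain ⟨⟨h1, _⟩, hd⟩ := hi
  have hi0 : (i : ℚ_[p]) ≠ 0 := by
    exact_mod_cast Nat.cast_ne_zero.mpr (by omega)
  rw [norm_mul, norm_div, norm_one, Padic.norm_p]
  have hnorm : ‖(i : ℚ_[p])‖ = 1 := by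
    have hle : ‖((i : ℤ) : ℚ_[p])‖ ≤ 1 := Padic.norm_int_le_one _
    have hlt : ¬ ‖((i : ℤ) : ℚ_[p])‖ < 1 := by
      rw [Padic.norm_intCast_lt_one_iff]
      exact_mod_cast hd
    push_cast at hle hlt
    linarith [lt_or_eq_of_le hle]
  rw [hnorm]
  simp
end
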